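/- Let r ≥ 2 and n ≥ r − 1, and let F be a homogeneous polynomial of degree n+2 in r real variables such that every iterated partial derivative of F of order ≤ n (including F itself) vanishes at every point of the affine cone of the rational normal curve, i.e., at every point (s^{r−1}, s^{r−2}t, …, t^{r−1}) ∈ ℝ^r with s,t ∈ ℝ. Then F is identically zero. (This expresses that the symbol algebra is of finite type: since the rational normal curve is nondegenerate, its n-th secant variety fills the whole projective space for n ≥ r−1, so the corresponding prolongation spaces vanish.) -/

import Mathlib

open MvPolynomial

namespace Stmt10Aux

variable {r : ℕ}

/-- Second partial derivatives commute. -/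
theorem pderiv_comm (i j : Fin r) (P : MvPolynomial (Fin r) ℝ) :
    pderiv i (pderiv j P) = pderiv j (pderiv i P) := by
  induction P using MvPolynomial.induction_on with
  | C a => simp
  | add p q hp hq => simp [hp, hq]
  | mul_X p k ih =>
    simp only [pderiv_mul, map_add, ih, pderiv_X]
    rcases eq_or_ne k i with rfl | hki <;> rcases eq_or_ne k j with rfl | hkj <;>
      simp_all [Pi.single_apply]

/-- Directional derivative. -/
noncomputable def Dv (v : Fin r → ℝ) (Q : MvPolynomial (Fin r) ℝ) : MvPolynomial (Fin r) ℝ :=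
  ∑ i, v i • pderiv i Q

theorem pderiv_Dv (j : Fin r) (v : Fin r → ℝ) (Q : MvPolynomial (Fin r) ℝ) :
    pderiv j (Dv v Q) = Dv v (pderiv j Q) := by
  simp only [Dv, map_sum, Derivation.map_smul, pderiv_comm]

theorem Dv_comm (u v : Fin r → ℝ) (Q : MvPolynomial (Fin r) ℝ) :
    Dv u (Dv v Q) = Dv v (Dv u Q) := by
  simp only [Dv, map_sum, Derivation.map_smul, Finset.smul_sum]
  rw [Finset.sum_comm]
  congr 1; funext i; congr 1; funext j
  rw [smul_comm, pderiv_comm]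

theorem Dv_add (v : Fin r → ℝ) (P Q : MvPolynomial (Fin r) ℝ) :
    Dv v (P + Q) = Dv v P + Dv v Q := by
  simp [Dv, Finset.sum_add_distrib, smul_add]

theorem Dv_smul (v : Fin r → ℝ) (c : ℝ) (Q : MvPolynomial (Fin r) ℝ) :
    Dv v (c • Q) = c • Dv v Q := by
  simp only [Dv, Derivation.map_smul, Finset.smul_sum, smul_comm c]


theorem foldr_Dv_pderiv (vs : List (Fin r → ℝ)) (j : Fin r) (Q : MvPolynomial (Fin r) ℝ) :
    pderiv j (vs.foldr Dv Q) = vs.foldr Dv (pderiv j Q) := by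
  induction vs with
  | nil => rfl
  | cons v tl ih => simp [List.foldr_cons, pderiv_Dv, ih]

theorem Dv_sum_smul {ι : Type*} (v : Fin r → ℝ) (s : Finset ι)
    (c : ι → ℝ) (Q : ι → MvPolynomial (Fin r) ℝ) :
    Dv v (∑ j ∈ s, c j • Q j) = ∑ j ∈ s, c j • Dv v (Q j) := by
  classical
  induction s using Finset.induction with
  | empty => simp [Dv]
  | insert _ _ h ih2 => rw [Finset.sum_insert h, Finset.sum_insert h, Dv_add, Dv_smul, ih2]

theorem foldr_Dv_sum_smul (vs : List (Fin r → ℝ)) {ι : Type*} (s : Finset ι)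
    (c : ι → ℝ) (Q : ι → MvPolynomial (Fin r) ℝ) :
    vs.foldr Dv (∑ j ∈ s, c j • Q j) = ∑ j ∈ s, c j • vs.foldr Dv (Q j) := by
  induction vs with
  | nil => rfl
  | cons v tl ih => simp only [List.foldr_cons, ih, Dv_sum_smul]

theorem Dv_sum_smul_v {ι : Type*} (s : Finset ι) (c : ι → ℝ) (w : ι → (Fin r → ℝ))
    (Q : MvPolynomial (Fin r) ℝ) :
    Dv (∑ j ∈ s, c j • w j) Q = ∑ j ∈ s, c j • Dv (w j) Q := by
  simp only [Dv, Finset.sum_apply, Pi.smul_apply, smul_eq_mul, Finset.sum_smul, mul_smul,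
    Finset.smul_sum]
  exact Finset.sum_comm

theorem isHom_pderiv {P : MvPolynomial (Fin r) ℝ} {m : ℕ} (h : P.IsHomogeneous (m + 1))
    (i : Fin r) : (pderiv i P).IsHomogeneous m := by
  conv_lhs => rw [P.as_sum]
  rw [map_sum]
  apply MvPolynomial.IsHomogeneous.sum
  intro v hv
  rw [pderiv_monomial]
  rcases Nat.eq_zero_or_pos (v i) with hvi | hvi
  · simp [hvi]
    exact isHomogeneous_zero _ _ _
  · apply isHomogeneous_monomial
    have hdeg : v.degree = m + 1 := by
      have := h (MvPolynomial.mem_support_iff.mp hv)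
      rw [Finsupp.degree_eq_weight_one]; exact this
    have hle : Finsupp.single i 1 ≤ v := by
      rw [Finsupp.single_le_iff]; exact hvi
    have hsum : (v - Finsupp.single i 1) + Finsupp.single i 1 = v :=
      tsub_add_cancel_of_le hle
    have : (v - Finsupp.single i 1).degree + (Finsupp.single i 1).degree = v.degree := by
      rw [← hsum]
      simp only [Finsupp.degree_eq_weight_one]
      rw [map_add, hsum]
    have hs1 : (Finsupp.single i (1:ℕ)).degree = 1 := by
      simp [Finsupp.degree_eq_weight_one, Finsupp.weight_apply, Finsupp.sum_single_index]
    omega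

theorem isHom_Dv {P : MvPolynomial (Fin r) ℝ} {m : ℕ} (h : P.IsHomogeneous (m + 1))
    (v : Fin r → ℝ) : (Dv v P).IsHomogeneous m := by
  rw [← mem_homogeneousSubmodule]
  exact Submodule.sum_mem _ fun i _ =>
    Submodule.smul_mem _ _ ((mem_homogeneousSubmodule _ _).mpr (isHom_pderiv h i))

theorem isHom_foldr_Dv (vs : List (Fin r → ℝ)) {P : MvPolynomial (Fin r) ℝ} {m : ℕ}
    (h : P.IsHomogeneous (m + vs.length)) : (vs.foldr Dv P).IsHomogeneous m := by
  induction vs generalizing m with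
  | nil => simpa using h
  | cons v tl ih =>
    simp only [List.foldr_cons]
    apply isHom_Dv
    apply ih
    have harith : m + 1 + tl.length = m + (v :: tl).length := by
      simp only [List.length_cons]; omega
    rw [harith]; exact h


theorem euler_monomial (v : Fin r →₀ ℕ) (c : ℝ) :
    ∑ i : Fin r, (X i : MvPolynomial (Fin r) ℝ) * pderiv i (monomial v c)
      = v.degree • monomial v c := by
  have hdeg : v.degree = ∑ i : Fin r, v i := by
    rw [Finsupp.degree]
    exact Finset.sum_subset (Finset.subset_univ _) fun i _ hi => by
      simpa using Finsupp.notMem_support_iff.mp hi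
  rw [hdeg, Finset.sum_smul]
  apply Finset.sum_congr rfl
  intro i _
  rw [pderiv_monomial]
  rcases Nat.eq_zero_or_pos (v i) with hvi | hvi
  · simp [hvi]
  · have hle : Finsupp.single i 1 ≤ v := by rw [Finsupp.single_le_iff]; exact hvi
    rw [show (X i : MvPolynomial (Fin r) ℝ) * monomial (v - Finsupp.single i 1) (c * (v i : ℝ))
        = X i ^ 1 * monomial (v - Finsupp.single i 1) (c * (v i : ℝ)) by rw [pow_one],
      ← monomial_single_add, add_tsub_cancel_of_le hle]
    rw [show (v i) • monomial v c = monomial v ((v i : ℝ) * c) by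
      rw [← map_nsmul (monomial v) (v i) c, nsmul_eq_mul]]
    rw [mul_comm]

theorem euler {P : MvPolynomial (Fin r) ℝ} {m : ℕ} (h : P.IsHomogeneous m) :
    ∑ i : Fin r, (X i : MvPolynomial (Fin r) ℝ) * pderiv i P = m • P := by
  conv_lhs => rw [P.as_sum]
  conv_rhs => rw [P.as_sum]
  simp only [map_sum, Finset.mul_sum, Finset.smul_sum]
  rw [Finset.sum_comm]
  apply Finset.sum_congr rfl
  intro v hv
  rw [euler_monomial]
  congr 1
  have := h (MvPolynomial.mem_support_iff.mp hv)
  rw [Finsupp.degree_eq_weight_one]; exact this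

theorem isHom_zero_eq_C {K : MvPolynomial (Fin r) ℝ} (h : K.IsHomogeneous 0) (x : Fin r → ℝ) :
    K = C (eval x K) := by
  have hK : K = C (MvPolynomial.coeff 0 K) := by
    ext m
    rcases eq_or_ne m 0 with rfl | hm
    · simp
    · rw [h.coeff_eq_zero, MvPolynomial.coeff_C, if_neg (Ne.symm hm)]
      rw [Ne, Finsupp.degree_eq_zero_iff]
      exact hm
  rw [hK]; simp

theorem eval_Dv_self {P : MvPolynomial (Fin r) ℝ} {m : ℕ} (h : P.IsHomogeneous m)
    (p : Fin r → ℝ) : eval p (Dv p P) = m * eval p P := by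
  have : eval p (Dv p P) = eval p (∑ i : Fin r, (X i : MvPolynomial (Fin r) ℝ) * pderiv i P) := by
    simp [Dv, smul_eq_C_mul]
  rw [this, euler h, map_nsmul, nsmul_eq_mul]


theorem stepA {n : ℕ} : ∀ (vs : List (Fin r → ℝ)) (Q : MvPolynomial (Fin r) ℝ),
    (∀ L : List (Fin r), L.length ≤ vs.length → ∀ s t : ℝ,
      eval (fun i : Fin r => s ^ (r - 1 - (i : ℕ)) * t ^ (i : ℕ))
        (L.foldr (fun v Q => pderiv v Q) Q) = 0) →
    ∀ s t : ℝ,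
      eval (fun i : Fin r => s ^ (r - 1 - (i : ℕ)) * t ^ (i : ℕ)) (vs.foldr Dv Q) = 0 := by
  intro vs
  induction vs with
  | nil => intro Q hQ s t; exact hQ [] (by simp) s t
  | cons v tl ih =>
    intro Q hQ s t
    simp only [List.foldr_cons]
    rw [show (Dv v (tl.foldr Dv Q)) = ∑ i, v i • pderiv i (tl.foldr Dv Q) from rfl, map_sum]
    apply Finset.sum_eq_zero
    intro i _
    rw [smul_eq_C_mul, map_mul, eval_C, foldr_Dv_pderiv]
    rw [ih (pderiv i Q) ?_ s t, mul_zero]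
    intro L hL s' t'
    have hfold : L.foldr (fun v Q => pderiv v Q) (pderiv i Q)
        = (L ++ [i]).foldr (fun v Q => pderiv v Q) Q := by
      rw [List.foldr_append]; rfl
    rw [hfold]
    exact hQ (L ++ [i]) (by simp [List.length_append]; omega) s' t'

theorem pair_zero {G : MvPolynomial (Fin r) ℝ} (hG : G.IsHomogeneous 2) (p : Fin r → ℝ)
    (hp : eval p G = 0) : Dv p (Dv p G) = 0 := by
  have h1 : (Dv p G).IsHomogeneous 1 := isHom_Dv hG p
  have h0 : (Dv p (Dv p G)).IsHomogeneous 0 := isHom_Dv h1 p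
  have he : eval p (Dv p (Dv p G)) = 0 := by
    rw [eval_Dv_self h1 p, eval_Dv_self hG p, hp]; ring
  rw [isHom_zero_eq_C h0 p, he, map_zero]

theorem multi_expand (b : Fin r → (Fin r → ℝ)) :
    ∀ (m : ℕ) (P : MvPolynomial (Fin r) ℝ),
    (∀ js : List (Fin r), js.length = m → (js.map b).foldr Dv P = 0) →
    ∀ c : Fin r → ℝ, (List.replicate m (∑ j, c j • b j)).foldr Dv P = 0 := by
  intro m
  induction m with
  | zero => intro P h c; exact h [] rfl
  | succ m ih =>
    intro P h c
    rw [List.replicate_succ', List.foldr_append]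
    rw [show List.foldr Dv P [∑ j, c j • b j] = Dv (∑ j, c j • b j) P from rfl]
    rw [Dv_sum_smul_v, foldr_Dv_sum_smul]
    apply Finset.sum_eq_zero
    intro j _
    rw [ih (Dv (b j) P) ?_ c, smul_zero]
    intro js hjs
    have hfold : (js.map b).foldr Dv (Dv (b j) P) = ((js ++ [j]).map b).foldr Dv P := by
      rw [List.map_append, List.foldr_append]; rfl
    rw [hfold]
    exact h (js ++ [j]) (by simp [hjs])

theorem diag_eval : ∀ (m : ℕ) (P : MvPolynomial (Fin r) ℝ), P.IsHomogeneous m →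
    ∀ x : Fin r → ℝ,
      eval x ((List.replicate m x).foldr Dv P) = (Nat.factorial m : ℝ) * eval x P := by
  intro m
  induction m with
  | zero => intro P h x; simp [Nat.factorial]
  | succ m ih =>
    intro P h x
    rw [List.replicate_succ', List.foldr_append]
    have h1 : (Dv x P).IsHomogeneous m := isHom_Dv h x
    rw [show List.foldr Dv P [x] = Dv x P from rfl]
    rw [ih (Dv x P) h1 x, eval_Dv_self h x, Nat.factorial_succ]
    push_cast; ring

theorem span_pow (r : ℕ) (x : Fin r → ℝ) :
    ∃ c : Fin r → ℝ, (∑ j, c j • (fun i : Fin r => ((j : ℕ) : ℝ) ^ (i : ℕ))) = x := by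
  classical
  set v : Fin r → ℝ := fun j => ((j : ℕ) : ℝ) with hv
  set M : Matrix (Fin r) (Fin r) ℝ := (Matrix.vandermonde v).transpose with hM
  have hdet : M.det ≠ 0 := by
    rw [hM, Matrix.det_transpose, Matrix.det_vandermonde]
    apply Finset.prod_ne_zero_iff.mpr
    intro i _
    apply Finset.prod_ne_zero_iff.mpr
    intro j hj
    have hij : i < j := Finset.mem_Ioi.mp hj
    have : (i : ℕ) < (j : ℕ) := hij
    simp only [hv, sub_ne_zero]
    exact_mod_cast Nat.ne_of_gt this
  have hunit : IsUnit M.det := isUnit_iff_ne_zero.mpr hdet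
  refine ⟨M⁻¹.mulVec x, ?_⟩
  have hMc : M.mulVec (M⁻¹.mulVec x) = x := by
    rw [Matrix.mulVec_mulVec, Matrix.mul_nonsing_inv M hunit, Matrix.one_mulVec]
  funext i
  have : (∑ j, M⁻¹.mulVec x j • (fun i : Fin r => ((j : ℕ) : ℝ) ^ (i : ℕ))) i
      = M.mulVec (M⁻¹.mulVec x) i := by
    simp only [Finset.sum_apply, Pi.smul_apply, smul_eq_mul, Matrix.mulVec, dotProduct,
      hM, Matrix.transpose_apply, Matrix.vandermonde, hv]
    exact Finset.sum_congr rfl fun j _ => by rw [mul_comm]; rfl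
  rw [this, hMc]

end Stmt10Aux

open Stmt10Aux in
/-- (Finite type.) -/
theorem stmt_10 (r n : ℕ) (hr : 2 ≤ r) (hn : r - 1 ≤ n)
    (F : MvPolynomial (Fin r) ℝ) (hF : F.IsHomogeneous (n + 2))
    (hvan : ∀ L : List (Fin r), L.length ≤ n → ∀ s t : ℝ,
      MvPolynomial.eval (fun i : Fin r => s ^ (r - 1 - (i : ℕ)) * t ^ (i : ℕ))
        (L.foldr (fun v Q => MvPolynomial.pderiv v Q) F) = 0) :
    F = 0 := by
  classical
  set b : Fin r → (Fin r → ℝ) :=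
    fun j i => (1 : ℝ) ^ (r - 1 - (i : ℕ)) * (((j : ℕ) : ℝ)) ^ (i : ℕ) with hb
  -- Step 1: the polarization of F vanishes on all (n+2)-tuples of curve points b j.
  have key0 : ∀ js : List (Fin r), js.length = n + 2 → (js.map b).foldr Dv F = 0 := by
    intro js hlen
    have hnd : ¬ js.Nodup := by
      intro h
      have := h.length_le_card
      rw [Fintype.card_fin] at this
      omega
    rw [List.nodup_iff_count_le_one] at hnd
    push_neg at hnd
    obtain ⟨a, ha⟩ := hnd
    have hmem : a ∈ js := by rw [← List.count_pos_iff]; omega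
    have hmem2 : a ∈ js.erase a := by
      rw [← List.count_pos_iff, List.count_erase_self]; omega
    have hperm : List.Perm js (a :: a :: (js.erase a).erase a) :=
      (List.perm_cons_erase hmem).trans ((List.perm_cons_erase hmem2).cons a)
    have hperm2 : List.Perm (js.map b) (b a :: b a :: ((js.erase a).erase a).map b) :=
      hperm.map b
    letI : LeftCommutative (Dv (r := r)) := ⟨fun u v Q => Dv_comm u v Q⟩
    rw [hperm2.foldr_eq F]
    set rest := ((js.erase a).erase a).map b with hrest
    have hrl : rest.length = n := by
      rw [hrest, List.length_map, List.length_erase_of_mem hmem2,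
        List.length_erase_of_mem hmem]
      omega
    set G : MvPolynomial (Fin r) ℝ := rest.foldr Dv F with hG
    have hGhom : G.IsHomogeneous 2 := by
      apply isHom_foldr_Dv
      rw [hrl]
      have : 2 + n = n + 2 := by omega
      rw [this]; exact hF
    have hGeval : MvPolynomial.eval (b a) G = 0 := by
      have := stepA (n := n) rest F
        (fun L hL s t => hvan L (by omega) s t) 1 ((a : ℕ) : ℝ)
      simpa [hb, one_pow] using this
    have : (b a :: b a :: rest).foldr Dv F = Dv (b a) (Dv (b a) G) := rfl
    rw [this, pair_zero hGhom (b a) hGeval]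
  -- Step 2: multilinear expansion over the Vandermonde basis.
  have key1 : ∀ x : Fin r → ℝ, (List.replicate (n + 2) x).foldr Dv F = 0 := by
    intro x
    obtain ⟨c, hc⟩ := span_pow r x
    have hbx : (∑ j, c j • b j) = x := by
      rw [← hc]
      apply Finset.sum_congr rfl
      intro j _
      congr 1
      funext i
      simp [hb, one_pow]
    rw [← hbx]
    exact multi_expand b (n + 2) F key0 c
  -- Step 3: conclude that F vanishes everywhere.
  have heval : ∀ x : Fin r → ℝ, MvPolynomial.eval x F = 0 := by
    intro x
    have h1 := diag_eval (n + 2) F hF x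
    rw [key1 x, map_zero] at h1
    have hfac : (Nat.factorial (n + 2) : ℝ) ≠ 0 := by
      exact_mod_cast Nat.factorial_ne_zero (n + 2)
    rcases mul_eq_zero.mp h1.symm with h | h
    · exact absurd h hfac
    · exact h
  apply MvPolynomial.funext
  intro x
  rw [heval x, map_zero]
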